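/- Let γ be a real number with |γ| > 1, a, s positive integers, 0 < m ≤ M real numbers, k ≥ 1, and ε_0, ..., ε_{k-1} complex numbers, not all zero, such that m ≤ |ε_j| ≤ M whenever ε_j ≠ 0. If ε_0 + ε_1 γ^{as} + ... + ε_{k-1} γ^{as(k-1)} = 0, then s ≤ log((M+m)/m) / (a log|γ|). -/

import Mathlib

theorem bound_s_of_vanishing_combination (γ : ℝ) (hγ : 1 < |γ|) (a s : ℕ) (ha : 1 ≤ a)
    (hs : 1 ≤ s) (m M : ℝ) (hm : 0 < m) (hmM : m ≤ M) (k : ℕ) (hk : 1 ≤ k)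
    (ε : Fin k → ℂ) (hne : ∃ j, ε j ≠ 0)
    (hε : ∀ j, ε j ≠ 0 → m ≤ ‖ε j‖ ∧ ‖ε j‖ ≤ M)
    (h : ∑ j : Fin k, ε j * (γ : ℂ) ^ (a * s * (j : ℕ)) = 0) :
    (s : ℝ) ≤ Real.log ((M + m) / m) / (a * Real.log |γ|) := by
  classical
  set x : ℝ := |γ| ^ (a * s) with hx_def
  have has : a * s ≠ 0 := by positivity
  have hx1 : 1 < x := one_lt_pow₀ hγ has
  have hx0 : 0 < x := lt_trans one_pos hx1
  have hγ0 : (0:ℝ) < |γ| := lt_trans one_pos hγ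
  have habs : ∀ j : Fin k, ‖ε j * (γ : ℂ) ^ (a * s * (j : ℕ))‖
      = ‖ε j‖ * x ^ (j : ℕ) := by
    intro j
    rw [norm_mul, norm_pow, Complex.norm_real, Real.norm_eq_abs, hx_def, ← pow_mul]
  set S := Finset.univ.filter (fun j : Fin k => ε j ≠ 0) with hS
  obtain ⟨j, hj⟩ := hne
  have hSne : S.Nonempty := ⟨j, by simp [hS, hj]⟩
  set j0 := S.max' hSne with hj0def
  have hj0ne : ε j0 ≠ 0 := by
    have := S.max'_mem hSne
    simpa [hS] using this
  have hgt : ∀ i : Fin k, j0 < i → ε i = 0 := by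
    intro i hi
    by_contra hne'
    exact absurd (S.le_max' i (by simp [hS, hne'])) (not_le.mpr hi)
  set n : ℕ := (j0 : ℕ) with hn
  have hsplit : ε j0 * (γ : ℂ) ^ (a * s * n)
      = - ∑ i ∈ Finset.univ.erase j0, ε i * (γ : ℂ) ^ (a * s * (i : ℕ)) := by
    have := Finset.add_sum_erase Finset.univ
      (fun i : Fin k => ε i * (γ : ℂ) ^ (a * s * (i : ℕ))) (Finset.mem_univ j0)
    rw [h] at this
    linear_combination this
  have hεj0 := hε j0 hj0ne
  have step1 : m * x ^ n ≤ ∑ i ∈ Finset.univ.erase j0,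
      ‖ε i * (γ : ℂ) ^ (a * s * (i : ℕ))‖ := by
    calc m * x ^ n ≤ ‖ε j0‖ * x ^ n := by
          gcongr
          exact hεj0.1
      _ = ‖ε j0 * (γ : ℂ) ^ (a * s * n)‖ := (habs j0).symm
      _ = ‖∑ i ∈ Finset.univ.erase j0, ε i * (γ : ℂ) ^ (a * s * (i : ℕ))‖ := by
          rw [hsplit, norm_neg]
      _ ≤ ∑ i ∈ Finset.univ.erase j0,
          ‖ε i * (γ : ℂ) ^ (a * s * (i : ℕ))‖ :=
          norm_sum_le _ _
  have step2 : ∑ i ∈ Finset.univ.erase j0,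
      ‖ε i * (γ : ℂ) ^ (a * s * (i : ℕ))‖
      ≤ ∑ i : Fin k, (if (i : ℕ) < n then M * x ^ (i : ℕ) else 0) := by
    rw [show (∑ i : Fin k, (if (i : ℕ) < n then M * x ^ (i : ℕ) else 0))
        = ∑ i ∈ Finset.univ.erase j0, (if (i : ℕ) < n then M * x ^ (i : ℕ) else 0) from
      (Finset.sum_erase _ (by simp [hn])).symm]
    apply Finset.sum_le_sum
    intro i hi
    have hij0 : i ≠ j0 := Finset.ne_of_mem_erase hi
    rw [habs i]
    by_cases hlt : (i : ℕ) < n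
    · rw [if_pos hlt]
      by_cases hz : ε i = 0
      · have hM0 : (0:ℝ) < M := lt_of_lt_of_le hm hmM
        simp only [hz, norm_zero, zero_mul]
        positivity
      · have h2 := (hε i hz).2
        have hxp : (0:ℝ) < x ^ (i : ℕ) := by positivity
        nlinarith
    · rw [if_neg hlt]
      have hji : j0 < i := by
        rw [Fin.lt_def]
        have : (i : ℕ) ≠ n := fun h' => hij0 (Fin.ext h')
        omega
      simp [hgt i hji]
  have step3 : ∑ i : Fin k, (if (i : ℕ) < n then M * x ^ (i : ℕ) else 0)
      = M * ((x ^ n - 1) / (x - 1)) := by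
    rw [Fin.sum_univ_eq_sum_range (fun i => if i < n then M * x ^ i else 0),
      ← Finset.sum_filter]
    have hnk : n < k := j0.isLt
    have hfil : (Finset.range k).filter (· < n) = Finset.range n := by
      ext i
      simp only [Finset.mem_filter, Finset.mem_range]
      omega
    rw [hfil, ← Finset.mul_sum, geom_sum_eq (ne_of_gt hx1)]
  have key : m * x ^ n ≤ M * ((x ^ n - 1) / (x - 1)) :=
    step1.trans (step2.trans_eq step3)
  have hxn : (0:ℝ) < x ^ n := by positivity
  have hx1' : (0:ℝ) < x - 1 := by linarith
  have hkey2 : m * (x - 1) ≤ M := by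
    rw [← mul_div_assoc] at key
    have h1 : m * x ^ n * (x - 1) ≤ M * (x ^ n - 1) := (le_div_iff₀ hx1').mp key
    nlinarith [h1, hxn, hm.le]
  have hxle : x ≤ (M + m) / m := by
    rw [le_div_iff₀ hm]
    nlinarith
  have hlog : ((a * s : ℕ) : ℝ) * Real.log |γ| ≤ Real.log ((M + m) / m) := by
    have := Real.log_le_log hx0 hxle
    rwa [hx_def, Real.log_pow] at this
  have ha' : (0:ℝ) < (a : ℝ) := by exact_mod_cast ha
  have hden : 0 < (a : ℝ) * Real.log |γ| := mul_pos ha' (Real.log_pos hγ)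
  rw [le_div_iff₀ hden]
  calc (s:ℝ) * ((a:ℝ) * Real.log |γ|) = ((a * s : ℕ) : ℝ) * Real.log |γ| := by
        push_cast; ring
    _ ≤ _ := hlog
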